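/- The homomorphism h: CB_n → A_n defined by h(r) = σ_1⋯σ_{n-1} and h(τ_i) = σ_i (1 ≤ i ≤ n-1) is surjective and admits a section, namely the homomorphism A_n → CB_n sending σ_i to τ_i. -/

import Mathlib

open FreeGroup

/-- The braid relations of the Artin braid group `Aₙ`, with generator `i : Fin (n-1)`
representing `σ_{i+1}`. -/
def artinRels (n : ℕ) : Set (FreeGroup (Fin (n - 1))) :=
  {x | (∃ i j : Fin (n - 1), (i : ℕ) + 1 = (j : ℕ) ∧
          x = of i * of j * of i * (of j * of i * of j)⁻¹) ∨
       (∃ i j : Fin (n - 1), (i : ℕ) + 1 < (j : ℕ) ∧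
          x = of i * of j * (of j * of i)⁻¹)}

/-- The Artin braid group `Aₙ` on `n` strings. -/
def ArtinBraidGroup (n : ℕ) : Type :=
  PresentedGroup (artinRels n)

noncomputable instance (n : ℕ) : Group (ArtinBraidGroup n) := by
  unfold ArtinBraidGroup; infer_instance

/-- The generator `σ_{i+1}` of `Aₙ`, for `i : Fin (n-1)`. -/
def artinSigma (n : ℕ) (i : Fin (n - 1)) : ArtinBraidGroup n :=
  PresentedGroup.of i

/-- The element `σ₁ σ₂ ⋯ σ_{n-1}` of `Aₙ`. -/
noncomputable def artinRword (n : ℕ) : ArtinBraidGroup n :=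
  ((List.finRange (n - 1)).map (artinSigma n)).prod

/-- The relations of the annular braid group `CBₙ`: generators `some i` (`i ∈ ℤ/n`)
are the `τᵢ`, and `none` is `r`; the relations are `r τᵢ r⁻¹ = τ_{i+1}`,
`τᵢ τ_{i+1} τᵢ = τ_{i+1} τᵢ τ_{i+1}`, and `τᵢ τⱼ = τⱼ τᵢ` for `j - i ≢ ±1 (mod n)`. -/
def annularRels (n : ℕ) : Set (FreeGroup (Option (ZMod n))) :=
  {x | (∃ i : ZMod n,
          x = of none * of (some i) * (of none)⁻¹ * (of (some (i + 1)))⁻¹) ∨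
       (∃ i : ZMod n,
          x = of (some i) * of (some (i + 1)) * of (some i) *
            (of (some (i + 1)) * of (some i) * of (some (i + 1)))⁻¹) ∨
       (∃ i j : ZMod n, j - i ≠ 1 ∧ i - j ≠ 1 ∧
          x = of (some i) * of (some j) * (of (some j) * of (some i))⁻¹)}

/-- The annular braid group `CBₙ`. -/
def AnnularBraidGroup (n : ℕ) : Type :=
  PresentedGroup (annularRels n)

noncomputable instance (n : ℕ) : Group (AnnularBraidGroup n) := by
  unfold AnnularBraidGroup; infer_instance

/-- The generator `τᵢ` of `CBₙ`. -/
def annTauGen (n : ℕ) (i : ZMod n) : AnnularBraidGroup n :=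
  PresentedGroup.of (some i)

/-- The generator `r` of `CBₙ`. -/
def annRGen (n : ℕ) : AnnularBraidGroup n :=
  PresentedGroup.of none

-- generic relation extraction
lemma mk_rel_eq_one {α : Type*} {rels : Set (FreeGroup α)} {r : FreeGroup α} (h : r ∈ rels) :
    PresentedGroup.mk rels r = 1 :=
  (QuotientGroup.eq_one_iff r).mpr (Subgroup.subset_normalClosure h)

lemma artin_braid_rel {n : ℕ} {i j : Fin (n - 1)} (h : (i : ℕ) + 1 = (j : ℕ)) :
    artinSigma n i * artinSigma n j * artinSigma n i
      = artinSigma n j * artinSigma n i * artinSigma n j := by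
  have h1 : (PresentedGroup.mk (artinRels n)
      (of i * of j * of i * (of j * of i * of j)⁻¹)) = 1 :=
    mk_rel_eq_one (Or.inl ⟨i, j, h, rfl⟩)
  simp only [_root_.map_mul, _root_.map_inv, mul_inv_eq_one] at h1
  exact h1

lemma artin_comm_rel {n : ℕ} {i j : Fin (n - 1)} (h : (i : ℕ) + 1 < (j : ℕ)) :
    artinSigma n i * artinSigma n j = artinSigma n j * artinSigma n i := by
  have h1 : (PresentedGroup.mk (artinRels n)
      (of i * of j * (of j * of i)⁻¹)) = 1 :=
    mk_rel_eq_one (Or.inr ⟨i, j, h, rfl⟩)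
  simp only [_root_.map_mul, _root_.map_inv, mul_inv_eq_one] at h1
  exact h1

/-- Padded generators indexed by ℕ. -/
noncomputable def gg (n k : ℕ) : ArtinBraidGroup n :=
  if h : k < n - 1 then artinSigma n ⟨k, h⟩ else 1

lemma gg_braid {n : ℕ} {k : ℕ} (hk : k + 1 < n - 1) :
    gg n k * gg n (k + 1) * gg n k = gg n (k + 1) * gg n k * gg n (k + 1) := by
  have hk' : k < n - 1 := by omega
  simp only [gg, dif_pos hk, dif_pos hk']
  exact artin_braid_rel rfl

lemma gg_comm {n : ℕ} {j k : ℕ} (h : j + 2 ≤ k) :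
    gg n j * gg n k = gg n k * gg n j := by
  by_cases hk : k < n - 1
  · have hj : j < n - 1 := by omega
    simp only [gg, dif_pos hk, dif_pos hj]
    exact artin_comm_rel (by simpa using by omega : (j : ℕ) + 1 < k)
  · simp [gg, dif_neg hk]

noncomputable def PP (n s l : ℕ) : ArtinBraidGroup n :=
  ((List.range' s l).map (gg n)).prod

lemma PP_zero (n s : ℕ) : PP n s 0 = 1 := rfl

lemma PP_succ_left (n s l : ℕ) : PP n s (l + 1) = gg n s * PP n (s + 1) l := by
  rw [PP, List.range'_succ]; simp [PP]

lemma PP_succ_right (n s l : ℕ) : PP n s (l + 1) = PP n s l * gg n (s + l) := by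
  rw [PP, List.range'_1_concat]; simp [PP]

lemma PP_append (n s l1 l2 : ℕ) : PP n s (l1 + l2) = PP n s l1 * PP n (s + l1) l2 := by
  rw [PP, PP, PP, ← List.range'_append_1 (s := s), List.map_append, List.prod_append]
lemma gg_comm_PP {n : ℕ} (t s l : ℕ) (h : s + l + 1 ≤ t ∨ t + 2 ≤ s) :
    gg n t * PP n s l = PP n s l * gg n t := by
  induction l generalizing s with
  | zero => simp [PP_zero]
  | succ l ih =>
    rw [PP_succ_left]
    have hts : gg n t * gg n s = gg n s * gg n t := by
      rcases h with h | h
      · exact (gg_comm (by omega)).symm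
      · exact gg_comm h
    calc gg n t * (gg n s * PP n (s + 1) l) = (gg n t * gg n s) * PP n (s + 1) l := by
          rw [mul_assoc]
      _ = gg n s * (gg n t * PP n (s + 1) l) := by rw [hts, mul_assoc]
      _ = gg n s * (PP n (s + 1) l * gg n t) := by rw [ih (s + 1) (by omega)]
      _ = gg n s * PP n (s + 1) l * gg n t := by rw [mul_assoc]

/-- `R` as a range' product. -/
noncomputable def RR (n : ℕ) : ArtinBraidGroup n := PP n 0 (n - 1)

lemma RR_shift {n : ℕ} {i : ℕ} (hi : i + 1 < n - 1) :
    RR n * gg n i = gg n (i + 1) * RR n := by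
  set l := n - 1 - (i + 2) with hl
  have e1 : RR n = PP n 0 i * gg n i * gg n (i + 1) * PP n (i + 2) l := by
    have h2 : PP n 0 (i + 2) = PP n 0 i * gg n i * gg n (i + 1) := by
      rw [PP_succ_right n 0 (i + 1), PP_succ_right n 0 i]
      simp [Nat.zero_add]
    have h3 := PP_append n 0 (i + 2) l
    rw [RR, show n - 1 = i + 2 + l from by omega, h3, h2]
    simp [Nat.zero_add]
  have hA : gg n (i + 1) * PP n 0 i = PP n 0 i * gg n (i + 1) :=
    gg_comm_PP _ _ _ (by omega)
  have hT : gg n i * PP n (i + 2) l = PP n (i + 2) l * gg n i :=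
    gg_comm_PP _ _ _ (by omega)
  have hb := gg_braid hi
  rw [e1]
  calc PP n 0 i * gg n i * gg n (i + 1) * PP n (i + 2) l * gg n i
      = PP n 0 i * (gg n i * gg n (i + 1) * gg n i) * PP n (i + 2) l := by
        rw [mul_assoc _ (PP n (i + 2) l) (gg n i), ← hT]; group
    _ = PP n 0 i * (gg n (i + 1) * gg n i * gg n (i + 1)) * PP n (i + 2) l := by rw [hb]
    _ = gg n (i + 1) * (PP n 0 i * gg n i * gg n (i + 1) * PP n (i + 2) l) := by
        rw [show PP n 0 i * (gg n (i + 1) * gg n i * gg n (i + 1))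
            = (PP n 0 i * gg n (i + 1)) * (gg n i * gg n (i + 1)) from by group, ← hA]
        group

lemma RR_shift_PP {n : ℕ} {s l : ℕ} (h : s + l < n - 1) :
    RR n * PP n s l = PP n (s + 1) l * RR n := by
  induction l with
  | zero => simp [PP_zero]
  | succ l ih =>
    rw [PP_succ_right, PP_succ_right, ← mul_assoc, ih (by omega), mul_assoc,
      RR_shift (by omega), show s + 1 + l = s + l + 1 from by omega, ← mul_assoc]
/-- The band generator family indexed by `ZMod n`. -/
noncomputable def aa (n : ℕ) (k : ZMod n) : ArtinBraidGroup n :=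
  if k.val = 0 then RR n * gg n (n - 2) * (RR n)⁻¹ else gg n (k.val - 1)

lemma aa_zero (n : ℕ) [NeZero n] : aa n 0 = RR n * gg n (n - 2) * (RR n)⁻¹ := by
  simp [aa, ZMod.val_zero]

lemma aa_of_val_ne {n : ℕ} {k : ZMod n} (h : k.val ≠ 0) : aa n k = gg n (k.val - 1) := by
  simp [aa, h]

/-- The key wrap-around identity: `R · (R g_{n-2} R⁻¹) · R⁻¹ = g 0`. -/
lemma RR_conj_aa_zero {n : ℕ} (hn : 2 ≤ n) :
    RR n * (RR n * gg n (n - 2) * (RR n)⁻¹) * (RR n)⁻¹ = gg n 0 := by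
  set m := n - 1 with hm
  have hm1 : 1 ≤ m := by omega
  set w := PP n 0 (m - 1) with hw
  set v := PP n 1 (m - 1) with hv
  have h1 : RR n = w * gg n (m - 1) := by
    rw [RR, hw, show n - 1 = (m - 1) + 1 from by omega, PP_succ_right, Nat.zero_add]
  have h2 : RR n = gg n 0 * v := by
    rw [RR, hv, show n - 1 = (m - 1) + 1 from by omega, PP_succ_left]
  have h3 : RR n * w = v * RR n := RR_shift_PP (by omega)
  have key : RR n * w * gg n (m - 1) = gg n 0 * (RR n * w) := by
    nth_rewrite 2 [h3]
    rw [← mul_assoc, ← h2]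
    nth_rewrite 3 [h1]
    rw [mul_assoc]
  have e0 : RR n * gg n (m - 1) * (RR n)⁻¹ = w * gg n (m - 1) * w⁻¹ := by
    rw [h1]; group
  rw [show n - 2 = m - 1 from by omega, e0]
  calc RR n * (w * gg n (m - 1) * w⁻¹) * (RR n)⁻¹
      = (RR n * w) * gg n (m - 1) * (RR n * w)⁻¹ := by group
    _ = (gg n 0 * (RR n * w)) * (RR n * w)⁻¹ := by rw [key]
    _ = gg n 0 := by group

lemma RR_conj_aa {n : ℕ} (hn : 2 ≤ n) (k : ZMod n) :
    RR n * aa n k = aa n (k + 1) * RR n := by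
  haveI : NeZero n := ⟨by omega⟩
  haveI : Fact (1 < n) := ⟨by omega⟩
  rcases Nat.eq_zero_or_pos k.val with h0 | hpos
  · -- k = 0
    have hk : k = 0 := by
      have := ZMod.natCast_zmod_val k
      rw [h0] at this; simpa using this.symm
    subst hk
    rw [aa_zero, show (0 : ZMod n) + 1 = 1 from by ring,
      aa_of_val_ne (by rw [ZMod.val_one n]; omega), ZMod.val_one n]
    have := RR_conj_aa_zero hn
    calc RR n * (RR n * gg n (n - 2) * (RR n)⁻¹)
        = (RR n * (RR n * gg n (n - 2) * (RR n)⁻¹) * (RR n)⁻¹) * RR n := by group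
      _ = gg n (1 - 1) * RR n := by rw [this]
  · rcases Nat.lt_or_ge k.val (n - 1) with hlt | hge
    · -- middle case
      have hk1 : (k + 1).val = k.val + 1 := by
        have : k + 1 = ((k.val + 1 : ℕ) : ZMod n) := by
          push_cast [ZMod.natCast_zmod_val]; ring
        rw [this, ZMod.val_cast_of_lt (by omega)]
      rw [aa_of_val_ne (by omega), aa_of_val_ne (by rw [hk1]; omega), hk1]
      have := RR_shift (n := n) (i := k.val - 1) (by omega)
      rw [show k.val - 1 + 1 = k.val from by omega] at this
      rw [show k.val + 1 - 1 = k.val from by omega]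
      exact this
    · -- k.val = n - 1, k + 1 = 0
      have hkv : k.val = n - 1 := by have := ZMod.val_lt k; omega
      have hk1 : k + 1 = 0 := by
        have : k = ((n - 1 : ℕ) : ZMod n) := by
          rw [← hkv, ZMod.natCast_zmod_val]
        rw [this, show ((n - 1 : ℕ) : ZMod n) + 1 = ((n - 1 + 1 : ℕ) : ZMod n) from by
          push_cast; ring, show n - 1 + 1 = n from by omega, ZMod.natCast_self]
      rw [aa_of_val_ne (by omega), hk1, aa_zero, hkv, show n - 1 - 1 = n - 2 from by omega]
      group
lemma RR_pow_conj {n : ℕ} (hn : 2 ≤ n) (k : ZMod n) (p : ℕ) :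
    RR n ^ p * aa n k = aa n (k + (p : ZMod n)) * RR n ^ p := by
  induction p with
  | zero => simp
  | succ p ih =>
    have : RR n ^ (p + 1) = RR n * RR n ^ p := by rw [pow_succ']
    rw [this, mul_assoc, ih, ← mul_assoc, RR_conj_aa hn, mul_assoc, ← this]
    push_cast
    ring_nf

lemma aa_conj_eq {n : ℕ} (hn : 2 ≤ n) (k : ZMod n) (p : ℕ) :
    aa n (k + (p : ZMod n)) = MulAut.conj (RR n ^ p) (aa n k) := by
  have h := RR_pow_conj hn k p
  rw [MulAut.conj_apply, eq_mul_inv_iff_mul_eq]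
  exact h.symm

lemma aa_braid_base {n : ℕ} (hn : 2 ≤ n) :
    aa n 1 * aa n 2 * aa n 1 = aa n 2 * aa n 1 * aa n 2 := by
  haveI : NeZero n := ⟨by omega⟩
  haveI : Fact (1 < n) := ⟨by omega⟩
  have ha1 : aa n 1 = gg n 0 := by
    rw [aa_of_val_ne (by rw [ZMod.val_one n]; omega), ZMod.val_one n]
  rcases Nat.lt_or_ge n 3 with h3 | h3
  · -- n = 2 : aa n 2 = aa n 0 = gg n 0
    have hn2 : n = 2 := by omega
    have h20 : (2 : ZMod n) = 0 := by
      rw [show (2 : ZMod n) = ((2 : ℕ) : ZMod n) from by push_cast; ring, hn2,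
        ZMod.natCast_self]
    have ha0 : aa n 0 = gg n 0 := by
      rw [aa_zero n]
      have hR : RR n = gg n 0 := by
        rw [RR, show n - 1 = 0 + 1 from by omega, PP_succ_right, PP_zero, one_mul]
      rw [show n - 2 = 0 from by omega, hR]
      group
    rw [h20, ha0, ha1]
  · -- n ≥ 3
    have ha2 : aa n 2 = gg n 1 := by
      have hv : (2 : ZMod n).val = 2 := by
        rw [show (2 : ZMod n) = ((2 : ℕ) : ZMod n) from by push_cast; ring,
          ZMod.val_cast_of_lt (by omega)]
      rw [aa_of_val_ne (by omega), hv]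
    rw [ha1, ha2]
    exact gg_braid (by omega)

lemma aa_braid {n : ℕ} (hn : 2 ≤ n) (k : ZMod n) :
    aa n k * aa n (k + 1) * aa n k = aa n (k + 1) * aa n k * aa n (k + 1) := by
  haveI : NeZero n := ⟨by omega⟩
  set p := (k - 1).val with hp
  have hk : k = 1 + (p : ZMod n) := by
    rw [hp, ZMod.natCast_zmod_val]; ring
  have hk1 : k + 1 = 2 + (p : ZMod n) := by rw [hk]; ring
  rw [hk1, hk, aa_conj_eq hn, aa_conj_eq hn, ← _root_.map_mul, ← _root_.map_mul,
    ← _root_.map_mul, ← _root_.map_mul, aa_braid_base hn]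

lemma aa_comm_base {n : ℕ} (hn : 2 ≤ n) (d : ZMod n) (h0 : d ≠ 0) (h1 : d ≠ 1)
    (h2 : d ≠ -1) : aa n 1 * aa n (1 + d) = aa n (1 + d) * aa n 1 := by
  haveI : NeZero n := ⟨by omega⟩
  haveI : Fact (1 < n) := ⟨by omega⟩
  have ha1 : aa n 1 = gg n 0 := by
    rw [aa_of_val_ne (by rw [ZMod.val_one n]; omega), ZMod.val_one n]
  set c := (1 + d).val with hc
  have hcast : ((c : ℕ) : ZMod n) = 1 + d := by rw [hc, ZMod.natCast_zmod_val]
  have hc0 : c ≠ 0 := by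
    intro h
    apply h2
    have : (1 : ZMod n) + d = 0 := by rw [← hcast, h]; simp
    linear_combination this
  have hc1 : c ≠ 1 := by
    intro h
    apply h0
    have : (1 : ZMod n) + d = 1 := by rw [← hcast, h]; simp
    linear_combination this
  have hc2 : c ≠ 2 := by
    intro h
    apply h1
    have : (1 : ZMod n) + d = 1 + 1 := by rw [← hcast, h]; push_cast; ring
    linear_combination this
  have hc3 : 3 ≤ c := by omega
  rw [ha1, aa_of_val_ne (by omega : (1 + d).val ≠ 0)]
  exact gg_comm (by omega : 0 + 2 ≤ (1 + d).val - 1)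

lemma aa_comm {n : ℕ} (hn : 2 ≤ n) (i j : ZMod n) (hji : j - i ≠ 1) (hij : i - j ≠ 1) :
    aa n i * aa n j = aa n j * aa n i := by
  haveI : NeZero n := ⟨by omega⟩
  rcases eq_or_ne i j with rfl | hne
  · rfl
  set d := j - i with hd
  have h0 : d ≠ 0 := fun h => hne (by linear_combination -h)
  have h2 : d ≠ -1 := fun h => hij (by linear_combination -h)
  set p := (i - 1).val with hp
  have hk : i = 1 + (p : ZMod n) := by rw [hp, ZMod.natCast_zmod_val]; ring
  have hk1 : j = (1 + d) + (p : ZMod n) := by rw [hd]; linear_combination hk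
  rw [hk1, hk, aa_conj_eq hn, aa_conj_eq hn, ← _root_.map_mul, ← _root_.map_mul,
    aa_comm_base hn d h0 hji h2]
lemma ann_braid (n : ℕ) (i : ZMod n) :
    annTauGen n i * annTauGen n (i + 1) * annTauGen n i
      = annTauGen n (i + 1) * annTauGen n i * annTauGen n (i + 1) := by
  have h1 : (PresentedGroup.mk (annularRels n)
      (of (some i) * of (some (i + 1)) * of (some i) *
        (of (some (i + 1)) * of (some i) * of (some (i + 1)))⁻¹)) = 1 :=
    mk_rel_eq_one (Or.inr (Or.inl ⟨i, rfl⟩))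
  simp only [_root_.map_mul, _root_.map_inv, mul_inv_eq_one] at h1
  exact h1

lemma ann_comm (n : ℕ) {i j : ZMod n} (h1 : j - i ≠ 1) (h2 : i - j ≠ 1) :
    annTauGen n i * annTauGen n j = annTauGen n j * annTauGen n i := by
  have h3 : (PresentedGroup.mk (annularRels n)
      (of (some i) * of (some j) * (of (some j) * of (some i))⁻¹)) = 1 :=
    mk_rel_eq_one (Or.inr (Or.inr ⟨i, j, h1, h2, rfl⟩))
  simp only [_root_.map_mul, _root_.map_inv, mul_inv_eq_one] at h3
  exact h3

lemma artinRword_eq (n : ℕ) : artinRword n = RR n := by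
  rw [artinRword, RR, PP, ← List.range_eq_range', ← List.map_coe_finRange_eq_range,
    List.map_map]
  congr 1
  apply List.map_congr_left
  intro i _
  simp only [Function.comp_apply, gg, dif_pos i.isLt, Fin.eta]

lemma aa_coe_succ {n : ℕ} (hn : 2 ≤ n) (i : Fin (n - 1)) :
    aa n (((i : ℕ) + 1 : ℕ) : ZMod n) = artinSigma n i := by
  have hlt : (i : ℕ) + 1 < n := by have := i.isLt; omega
  have hv : ((((i : ℕ) + 1 : ℕ) : ZMod n)).val = (i : ℕ) + 1 := ZMod.val_cast_of_lt hlt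
  rw [aa_of_val_ne (by rw [hv]; omega), hv]
  simp only [Nat.add_sub_cancel, gg, dif_pos i.isLt, Fin.eta]

noncomputable def hHom (n : ℕ) (hn : 2 ≤ n) : AnnularBraidGroup n →* ArtinBraidGroup n :=
  PresentedGroup.toGroup (f := fun o : Option (ZMod n) => o.elim (RR n) (aa n)) <| by
    rintro r (⟨i, rfl⟩ | ⟨i, rfl⟩ | ⟨i, j, h1, h2, rfl⟩) <;>
      simp only [_root_.map_mul, _root_.map_inv, FreeGroup.lift_apply_of, Option.elim_none,
        Option.elim_some, mul_inv_eq_one]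
    · rw [mul_inv_eq_iff_eq_mul]
      exact RR_conj_aa hn i
    · exact aa_braid hn i
    · exact aa_comm hn i j h1 h2

noncomputable def sHom (n : ℕ) (hn : 2 ≤ n) : ArtinBraidGroup n →* AnnularBraidGroup n :=
  PresentedGroup.toGroup
    (f := fun i : Fin (n - 1) => annTauGen n (((i : ℕ) + 1 : ℕ) : ZMod n)) <| by
    rintro r (⟨i, j, hij, rfl⟩ | ⟨i, j, hij, rfl⟩) <;>
      simp only [_root_.map_mul, _root_.map_inv, FreeGroup.lift_apply_of, mul_inv_eq_one]
    · have hj : (((j : ℕ) + 1 : ℕ) : ZMod n) = (((i : ℕ) + 1 : ℕ) : ZMod n) + 1 := by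
        rw [← hij]; push_cast; ring
      rw [hj]
      exact ann_braid n _
    · have hi' := i.isLt
      have hj' := j.isLt
      have hd2 : 2 ≤ (j : ℕ) - (i : ℕ) := by omega
      have hdn : (j : ℕ) - (i : ℕ) ≤ n - 2 := by omega
      have hcast : (((j : ℕ) + 1 : ℕ) : ZMod n) - (((i : ℕ) + 1 : ℕ) : ZMod n)
          = (((j : ℕ) - (i : ℕ) : ℕ) : ZMod n) := by
        rw [Nat.cast_sub (by omega : (i : ℕ) ≤ (j : ℕ))]
        push_cast
        ring
      apply ann_comm n
      · rw [hcast]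
        intro hc
        have hc' : (((j : ℕ) - (i : ℕ) : ℕ) : ZMod n) = ((1 : ℕ) : ZMod n) := by
          exact_mod_cast hc
        rw [ZMod.natCast_eq_natCast_iff] at hc'
        have := Nat.ModEq.eq_of_lt_of_lt hc' (by omega) (by omega)
        omega
      · rw [show (((i : ℕ) + 1 : ℕ) : ZMod n) - (((j : ℕ) + 1 : ℕ) : ZMod n)
            = -((((j : ℕ) + 1 : ℕ) : ZMod n) - (((i : ℕ) + 1 : ℕ) : ZMod n)) from by ring,
          hcast]
        intro hc
        have : ((((j : ℕ) - (i : ℕ) + 1 : ℕ)) : ZMod n) = 0 := by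
          push_cast
          linear_combination -hc
        rw [ZMod.natCast_eq_zero_iff] at this
        have := Nat.le_of_dvd (by omega) this
        omega

lemma hHom_of (n : ℕ) (hn : 2 ≤ n) (o : Option (ZMod n)) :
    hHom n hn (PresentedGroup.of o) = o.elim (RR n) (aa n) :=
  PresentedGroup.toGroup.of _

lemma sHom_of (n : ℕ) (hn : 2 ≤ n) (i : Fin (n - 1)) :
    sHom n hn (PresentedGroup.of i) = annTauGen n (((i : ℕ) + 1 : ℕ) : ZMod n) :=
  PresentedGroup.toGroup.of _

lemma hs_id (n : ℕ) (hn : 2 ≤ n) (x : ArtinBraidGroup n) : hHom n hn (sHom n hn x) = x := by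
  suffices h : (hHom n hn).comp (sHom n hn) = MonoidHom.id (ArtinBraidGroup n) by
    calc hHom n hn (sHom n hn x) = ((hHom n hn).comp (sHom n hn)) x := rfl
      _ = x := by rw [h]; rfl
  apply PresentedGroup.ext
  intro i
  show hHom n hn (sHom n hn (PresentedGroup.of i)) = PresentedGroup.of i
  rw [sHom_of n hn i]
  have e2 : hHom n hn (annTauGen n (((i : ℕ) + 1 : ℕ) : ZMod n))
      = aa n (((i : ℕ) + 1 : ℕ) : ZMod n) := hHom_of n hn (some _)
  rw [e2]
  exact aa_coe_succ hn i

/-- The homomorphism `h : CBₙ → Aₙ` defined by `h(r) = σ₁⋯σ_{n-1}` and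
`h(τᵢ) = σᵢ` (`1 ≤ i ≤ n-1`) is surjective, and it admits a section, namely the
homomorphism `Aₙ → CBₙ` sending `σᵢ` to `τᵢ`. -/
theorem annular_to_artin_surjective_section (n : ℕ) (hn : 2 ≤ n) :
    ∃ h : AnnularBraidGroup n →* ArtinBraidGroup n,
      h (annRGen n) = artinRword n ∧
      (∀ i : Fin (n - 1), h (annTauGen n (((i : ℕ) + 1 : ℕ) : ZMod n)) = artinSigma n i) ∧
      Function.Surjective h ∧
      ∃ s : ArtinBraidGroup n →* AnnularBraidGroup n,
        (∀ i : Fin (n - 1), s (artinSigma n i) = annTauGen n (((i : ℕ) + 1 : ℕ) : ZMod n)) ∧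
        ∀ x, h (s x) = x := by
  refine ⟨hHom n hn, ?_, ?_, ?_, sHom n hn, ?_, hs_id n hn⟩
  · exact (hHom_of n hn none).trans (artinRword_eq n).symm
  · intro i
    exact (hHom_of n hn (some _)).trans (aa_coe_succ hn i)
  · intro x
    exact ⟨sHom n hn x, hs_id n hn x⟩
  · intro i
    exact sHom_of n hn i
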